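/- Under componentwise addition modulo n+1 on [n+1]^m (with m ≤ n), every coset of the cyclic subgroup generated by (1,1,...,1) contains exactly n-m+1 parking functions of PF(m,n). That is, for every π ∈ [n+1]^m, exactly n-m+1 of the n+1 translates π + k·(1,...,1) mod (n+1) (representatives taken in {1,...,n+1}) lie in PF(m,n). -/

import Mathlib

/-- `π : [m] → [n]` is a parking function in `PF(m,n)`. -/
def IsPF (m n : ℕ) (π : Fin m → ℕ) : Prop :=
  (∀ k, 1 ≤ π k ∧ π k ≤ n) ∧
  ∀ i, i ≤ n → m + i ≤ (Finset.univ.filter (fun k => π k ≤ i)).card + n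

namespace PollakAux

variable (m n : ℕ) (π : Fin m → Fin (n + 1))

/-- number of cars whose value (in `Fin (n+1)`) is `r % (n+1)` -/
def cc (r : ℕ) : ℕ := (Finset.univ.filter fun l => (π l : ℕ) = r % (n + 1)).card

lemma cc_period (r : ℕ) : cc m n π (r + (n + 1)) = cc m n π r := by
  unfold cc; rw [Nat.add_mod_right]

lemma sum_cc : ∑ r ∈ Finset.range (n + 1), cc m n π r = m := by
  have h := Finset.card_eq_sum_card_fiberwise (f := fun l => (π l : ℕ))
      (s := Finset.univ) (t := Finset.range (n + 1)) (by
        intro x _; exact Finset.mem_range.mpr (π x).isLt)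
  rw [Finset.card_univ, Fintype.card_fin] at h
  have h2 : ∑ r ∈ Finset.range (n + 1), cc m n π r
      = ∑ b ∈ Finset.range (n + 1),
        (Finset.filter (fun a => (π a : ℕ) = b) Finset.univ).card := by
    apply Finset.sum_congr rfl
    intro r hr
    unfold cc
    rw [Nat.mod_eq_of_lt (Finset.mem_range.mp hr)]
  rw [h2, ← h]

/-- prefix sums minus `t` -/
def S (t : ℕ) : ℤ := (∑ j ∈ Finset.range t, (cc m n π j : ℤ)) - t

lemma S_zero : S m n π 0 = 0 := by simp [S]

lemma S_succ (t : ℕ) : S m n π (t + 1) = S m n π t + cc m n π t - 1 := by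
  unfold S; rw [Finset.sum_range_succ]; push_cast; ring

lemma S_step (t : ℕ) : S m n π t - 1 ≤ S m n π (t + 1) := by
  have h := S_succ m n π t
  have h2 : (0 : ℤ) ≤ cc m n π t := Int.natCast_nonneg _
  linarith

lemma S_period (t : ℕ) : S m n π (t + (n + 1)) = S m n π t + m - (n + 1) := by
  induction t with
  | zero =>
    show S m n π (0 + (n + 1)) = _
    rw [Nat.zero_add]
    unfold S
    rw [← Nat.cast_sum, sum_cc]
    simp
  | succ t ih =>
    have h1 : t + 1 + (n + 1) = (t + (n + 1)) + 1 := by omega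
    rw [h1, S_succ, ih, cc_period, S_succ]
    ring


lemma cancel_mod {kv x : ℕ} (hk : kv ≤ n) (hx : x < n + 1) :
    ((x + kv) % (n + 1) + (n + 1 - kv)) % (n + 1) = x := by
  rw [Nat.mod_add_mod]
  have h1 : x + kv + (n + 1 - kv) = x + (n + 1) := by omega
  rw [h1, Nat.add_mod_right, Nat.mod_eq_of_lt hx]

lemma mod_shift {kv x j : ℕ} (hk : kv ≤ n) (hx : x < n + 1) (hj : j < n + 1) :
    (x + kv) % (n + 1) = j ↔ x = (n + 1 - kv + j) % (n + 1) := by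
  have hu : (n + 1 - kv + j) % (n + 1) < n + 1 := Nat.mod_lt _ (by omega)
  have hgu : ((n + 1 - kv + j) % (n + 1) + kv) % (n + 1) = j := by
    rw [Nat.mod_add_mod]
    have h1 : n + 1 - kv + j + kv = j + (n + 1) := by omega
    rw [h1, Nat.add_mod_right, Nat.mod_eq_of_lt hj]
  constructor
  · intro h
    have hc := cancel_mod n hk hx
    rw [h, Nat.add_comm] at hc
    exact hc.symm
  · intro h
    rw [h]; exact hgu

/-- the cyclic count identity: number of cars with shifted value `< i`. -/
lemma count_eq (k : Fin (n + 1)) (i : ℕ) (hi : i ≤ n + 1) :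
    (Finset.univ.filter fun l => ((π l + k : Fin (n + 1)) : ℕ) < i).card
      = ∑ j ∈ Finset.range i, cc m n π (n + 1 - (k : ℕ) + j) := by
  have h := Finset.card_eq_sum_card_fiberwise
      (f := fun l => ((π l + k : Fin (n + 1)) : ℕ))
      (s := Finset.univ.filter fun l => ((π l + k : Fin (n + 1)) : ℕ) < i)
      (t := Finset.range i) (by
        intro x hx; exact Finset.mem_range.mpr (Finset.mem_filter.mp hx).2)
  rw [h]
  apply Finset.sum_congr rfl
  intro j hj
  have hji : j < i := Finset.mem_range.mp hj
  have hjn : j < n + 1 := by omega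
  unfold cc
  congr 1
  ext l
  simp only [Finset.mem_filter, Finset.mem_univ, true_and]
  rw [Fin.val_add]
  constructor
  · rintro ⟨-, h2⟩
    exact (mod_shift n (Nat.lt_succ_iff.mp k.isLt) (π l).isLt hjn).mp h2
  · intro h2
    have h3 := (mod_shift n (Nat.lt_succ_iff.mp k.isLt) (π l).isLt hjn).mpr h2
    exact ⟨by omega, h3⟩

/-- the "good shift" predicate -/
def Good (s : ℕ) : Prop := ∀ i ≤ n, S m n π s - ((n : ℤ) + 1 - m) < S m n π (s + i)

lemma S_diff (s i : ℕ) :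
    S m n π (s + i) = S m n π s + (∑ j ∈ Finset.range i, (cc m n π (s + j) : ℤ)) - i := by
  have h1 : ∑ j ∈ Finset.range s, (cc m n π j : ℤ)
      + ∑ j ∈ Finset.Ico s (s + i), (cc m n π j : ℤ)
      = ∑ j ∈ Finset.range (s + i), (cc m n π j : ℤ) := by
    simp only [Finset.range_eq_Ico]
    exact Finset.sum_Ico_consecutive (fun j => (cc m n π j : ℤ)) (Nat.zero_le s) (Nat.le_add_right s i)
  have h2 : ∑ j ∈ Finset.Ico s (s + i), (cc m n π j : ℤ)
      = ∑ j ∈ Finset.range i, (cc m n π (s + j) : ℤ) := by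
    rw [Finset.sum_Ico_eq_sum_range, Nat.add_sub_cancel_left]
  unfold S
  rw [← h1, h2]
  push_cast; ring

lemma isPF_iff (hmn : m ≤ n) (k : Fin (n + 1)) :
    IsPF m n (fun i => ((π i + k : Fin (n + 1)) : ℕ) + 1) ↔ Good m n π (n + 1 - (k : ℕ)) := by
  classical
  set s : ℕ := n + 1 - (k : ℕ) with hs
  have hcount : ∀ i, i ≤ n + 1 →
      (Finset.univ.filter fun l => ((π l + k : Fin (n + 1)) : ℕ) + 1 ≤ i).card
        = ∑ j ∈ Finset.range i, cc m n π (s + j) := by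
    intro i hi
    rw [← count_eq m n π k i hi]
    apply congrArg Finset.card
    apply Finset.filter_congr
    intro l _
    constructor <;> intro h <;> omega
  have key : ∀ i, i ≤ n →
      ((m + i ≤ (Finset.univ.filter fun l =>
          ((π l + k : Fin (n + 1)) : ℕ) + 1 ≤ i).card + n) ↔
        (S m n π s - ((n : ℤ) + 1 - m) < S m n π (s + i))) := by
    intro i hi
    rw [S_diff, hcount i (by omega)]
    have hcast : ((∑ j ∈ Finset.range i, cc m n π (s + j) : ℕ) : ℤ)
        = ∑ j ∈ Finset.range i, (cc m n π (s + j) : ℤ) := Nat.cast_sum _ _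
    constructor
    · intro h
      have h' : (m : ℤ) + i ≤ ((∑ j ∈ Finset.range i, cc m n π (s + j) : ℕ) : ℤ) + n := by
        exact_mod_cast h
      rw [hcast] at h'
      linarith
    · intro h
      rw [← hcast] at h
      have h' : (m : ℤ) + i ≤ ((∑ j ∈ Finset.range i, cc m n π (s + j) : ℕ) : ℤ) + n := by
        linarith
      exact_mod_cast h'
  constructor
  · rintro ⟨h1, h2⟩ i hi
    exact (key i hi).mp (h2 i hi)
  · intro hg
    have hcond2 : ∀ i, i ≤ n → m + i ≤ (Finset.univ.filter fun l =>
        ((π l + k : Fin (n + 1)) : ℕ) + 1 ≤ i).card + n := fun i hi => (key i hi).mpr (hg i hi)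
    refine ⟨?_, hcond2⟩
    intro l
    refine ⟨Nat.le_add_left 1 _, ?_⟩
    have h := hcond2 n le_rfl
    have hm : m ≤ (Finset.univ.filter fun l =>
        ((π l + k : Fin (n + 1)) : ℕ) + 1 ≤ n).card := by omega
    have hle : (Finset.univ.filter fun l =>
        ((π l + k : Fin (n + 1)) : ℕ) + 1 ≤ n).card ≤ m := by
      calc _ ≤ (Finset.univ : Finset (Fin m)).card := Finset.card_filter_le _ _
      _ = m := by simp
    have huniv : (Finset.univ.filter fun l =>
        ((π l + k : Fin (n + 1)) : ℕ) + 1 ≤ n) = Finset.univ := by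
      apply Finset.eq_univ_of_card
      simp only [Finset.card_univ, Fintype.card_fin]
      omega
    have hmem : l ∈ Finset.univ.filter (fun l => ((π l + k : Fin (n + 1)) : ℕ) + 1 ≤ n) := by
      rw [huniv]; exact Finset.mem_univ l
    exact (Finset.mem_filter.mp hmem).2


/-- strict record minimum -/
def Record (t : ℕ) : Prop := ∀ j < t, S m n π t < S m n π j

/-- running minimum of `S` over `[0, b]` -/
def Mn : ℕ → ℤ
  | 0 => S m n π 0
  | b + 1 => min (Mn b) (S m n π (b + 1))

lemma Mn_le : ∀ b j, j ≤ b → Mn m n π b ≤ S m n π j := by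
  intro b
  induction b with
  | zero => intro j hj; interval_cases j; exact le_refl _
  | succ b ih =>
    intro j hj
    rcases Nat.lt_succ_iff_lt_or_eq.mp (Nat.lt_succ_of_le hj) with h | h
    · exact le_trans (min_le_left _ _) (ih j (by omega))
    · rw [h]; exact min_le_right _ _

lemma Mn_exists : ∀ b, ∃ j ≤ b, Mn m n π b = S m n π j := by
  intro b
  induction b with
  | zero => exact ⟨0, le_refl _, rfl⟩
  | succ b ih =>
    obtain ⟨j, hj, hje⟩ := ih
    rcases le_or_gt (Mn m n π b) (S m n π (b + 1)) with h | h
    · exact ⟨j, by omega, by rw [show Mn m n π (b+1) = min (Mn m n π b) (S m n π (b+1)) from rfl, min_eq_left h, hje]⟩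
    · exact ⟨b + 1, le_refl _, by rw [show Mn m n π (b+1) = min (Mn m n π b) (S m n π (b+1)) from rfl, min_eq_right (le_of_lt h)]⟩

lemma record_succ_iff (b : ℕ) : Record m n π (b + 1) ↔ S m n π (b + 1) < Mn m n π b := by
  constructor
  · intro h
    obtain ⟨j, hj, hje⟩ := Mn_exists m n π b
    rw [hje]
    exact h j (by omega)
  · intro h j hj
    exact lt_of_lt_of_le h (Mn_le m n π b j (by omega))

open Classical in
lemma card_record (b : ℕ) :
    (((Finset.Icc 1 b).filter (Record m n π)).card : ℤ) = - Mn m n π b := by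
  induction b with
  | zero => simp [Mn, S_zero]
  | succ b ih =>
    have hins : Finset.Icc 1 (b + 1) = insert (b + 1) (Finset.Icc 1 b) :=
      (Finset.insert_Icc_right_eq_Icc_add_one (by omega)).symm
    have hnotmem : (b + 1) ∉ Finset.Icc 1 b := by simp
    have hMn : Mn m n π (b + 1) = min (Mn m n π b) (S m n π (b + 1)) := rfl
    by_cases hr : Record m n π (b + 1)
    · have hlt : S m n π (b + 1) < Mn m n π b := (record_succ_iff m n π b).mp hr
      have hge : Mn m n π b - 1 ≤ S m n π (b + 1) :=
        le_trans (by linarith [Mn_le m n π b b (le_refl b)]) (S_step m n π b)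
      have heq : S m n π (b + 1) = Mn m n π b - 1 := by omega
      rw [hins, Finset.filter_insert, if_pos hr, Finset.card_insert_of_notMem
        (fun hc => hnotmem (Finset.mem_of_mem_filter _ hc))]
      rw [hMn, heq, min_eq_right (by omega)]
      push_cast
      omega
    · rw [hins, Finset.filter_insert, if_neg hr, hMn,
        min_eq_left (by linarith [not_lt.mp (fun hc => hr ((record_succ_iff m n π b).mpr hc))])]
      exact ih

lemma Mn_shift (hmn : m ≤ n) :
    Mn m n π (2 * (n + 1)) = Mn m n π (n + 1) - ((n : ℤ) + 1 - m) := by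
  have hper : ∀ t, S m n π (t + (n + 1)) = S m n π t - ((n : ℤ) + 1 - m) := by
    intro t; rw [S_period]; push_cast; ring
  apply le_antisymm
  · obtain ⟨j, hj, hje⟩ := Mn_exists m n π (n + 1)
    calc Mn m n π (2 * (n + 1)) ≤ S m n π (j + (n + 1)) := Mn_le m n π _ _ (by omega)
    _ = Mn m n π (n + 1) - ((n : ℤ) + 1 - m) := by rw [hper, hje]
  · obtain ⟨j, hj, hje⟩ := Mn_exists m n π (2 * (n + 1))
    rw [hje]
    rcases le_or_gt j (n + 1) with h | h
    · have h1 := Mn_le m n π (n + 1) j h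
      have hp : (0 : ℤ) ≤ (n : ℤ) + 1 - m := by
        have : (m : ℤ) ≤ n := by exact_mod_cast hmn
        linarith
      linarith
    · have h2 : j - (n + 1) ≤ n + 1 := by omega
      have h3 : S m n π j = S m n π (j - (n + 1)) - ((n : ℤ) + 1 - m) := by
        rw [← hper, Nat.sub_add_cancel (by omega)]
      rw [h3]
      have h4 := Mn_le m n π (n + 1) (j - (n + 1)) h2
      linarith

lemma good_iff_record (hmn : m ≤ n) (s : ℕ) :
    Good m n π s ↔ Record m n π (s + (n + 1)) := by
  have hper : ∀ t, S m n π (t + (n + 1)) = S m n π t - ((n : ℤ) + 1 - m) := by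
    intro t; rw [S_period]; push_cast; ring
  have hp : (1 : ℤ) ≤ (n : ℤ) + 1 - m := by
    have : (m : ℤ) ≤ n := by exact_mod_cast hmn
    linarith
  constructor
  · intro hg
    have key : ∀ d j, s - j ≤ d → j < s + (n + 1) → S m n π (s + (n + 1)) < S m n π j := by
      intro d
      induction d with
      | zero =>
        intro j h1 h2
        have hsj : s ≤ j := by omega
        have hij : j = s + (j - s) := by omega
        have hgi := hg (j - s) (by omega)
        rw [hper s, hij]
        exact hgi
      | succ d ih =>
        intro j h1 h2
        by_cases hsj : s ≤ j
        · have hij : j = s + (j - s) := by omega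
          have hgi := hg (j - s) (by omega)
          rw [hper s, hij]
          exact hgi
        · have h5 := ih (j + (n + 1)) (by omega) (by omega)
          have h6 := hper j
          linarith
    intro j hj
    exact key (s - j) j (le_refl _) hj
  · intro hr i hi
    have := hr (s + i) (by omega)
    rw [hper] at this
    linarith

open Classical in
theorem main (hmn : m ≤ n) :
    {k : Fin (n + 1) | IsPF m n (fun i => ((π i + k : Fin (n + 1)) : ℕ) + 1)}.ncard =
      n - m + 1 := by
  classical
  -- step 1 : ncard to Finset card
  rw [Set.ncard_eq_toFinset_card']
  have h1 : {k : Fin (n + 1) | IsPF m n (fun i => ((π i + k : Fin (n + 1)) : ℕ) + 1)}.toFinset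
      = Finset.univ.filter (fun k : Fin (n + 1) =>
          IsPF m n (fun i => ((π i + k : Fin (n + 1)) : ℕ) + 1)) := by
    ext k; simp
  rw [h1]
  -- step 2 : biject with good shifts
  have h2 : (Finset.univ.filter (fun k : Fin (n + 1) =>
      IsPF m n (fun i => ((π i + k : Fin (n + 1)) : ℕ) + 1))).card
      = ((Finset.Icc 1 (n + 1)).filter (Good m n π)).card := by
    apply Finset.card_bij (fun (k : Fin (n + 1)) _ => n + 1 - (k : ℕ))
    · intro k hk
      rw [Finset.mem_filter] at hk ⊢
      refine ⟨?_, ?_⟩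
      · have := k.isLt
        simp only [Finset.mem_Icc]
        omega
      · exact (isPF_iff m n π hmn k).mp hk.2
    · intro k1 h1 k2 h2 he
      have hk1 := k1.isLt
      have hk2 := k2.isLt
      apply Fin.ext
      omega
    · intro b hb
      rw [Finset.mem_filter, Finset.mem_Icc] at hb
      refine ⟨⟨(n + 1 - b) % (n + 1), Nat.mod_lt _ (by omega)⟩, ?_, ?_⟩
      · rw [Finset.mem_filter]
        refine ⟨Finset.mem_univ _, ?_⟩
        apply (isPF_iff m n π hmn _).mpr
        have hval : ((⟨(n + 1 - b) % (n + 1), Nat.mod_lt _ (by omega)⟩ : Fin (n + 1)) : ℕ)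
            = (n + 1 - b) % (n + 1) := rfl
        have hh : n + 1 - ((n + 1 - b) % (n + 1)) = b := by
          rcases Nat.lt_or_ge (n + 1 - b) (n + 1) with h | h
          · rw [Nat.mod_eq_of_lt h]; omega
          · have hb0 : b = 0 := by omega
            omega
        rw [hval, hh]
        exact hb.2
      · have hh : (((⟨(n + 1 - b) % (n + 1), Nat.mod_lt _ (by omega)⟩ : Fin (n + 1))) : ℕ)
            = (n + 1 - b) % (n + 1) := rfl
        rw [hh]
        rcases Nat.lt_or_ge (n + 1 - b) (n + 1) with h | h
        · rw [Nat.mod_eq_of_lt h]; omega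
        · have hb0 : b = 0 := by omega
          omega
  rw [h2]
  -- step 3 : good shifts are records in the second window
  have h3 : ((Finset.Icc 1 (n + 1)).filter (Good m n π)).card
      = ((Finset.Icc (n + 2) (2 * (n + 1))).filter (Record m n π)).card := by
    apply Finset.card_bij (fun s _ => s + (n + 1))
    · intro s hs
      rw [Finset.mem_filter, Finset.mem_Icc] at hs ⊢
      exact ⟨⟨by omega, by omega⟩, (good_iff_record m n π hmn s).mp hs.2⟩
    · intro s1 _ s2 _ he; omega
    · intro t ht
      rw [Finset.mem_filter, Finset.mem_Icc] at ht
      refine ⟨t - (n + 1), ?_, by omega⟩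
      rw [Finset.mem_filter, Finset.mem_Icc]
      refine ⟨⟨by omega, by omega⟩, ?_⟩
      apply (good_iff_record m n π hmn _).mpr
      have : t - (n + 1) + (n + 1) = t := by omega
      rw [this]
      exact ht.2
  rw [h3]
  -- step 4 : count records via running minimum
  have hsplit : Finset.Icc 1 (2 * (n + 1)) = Finset.Icc 1 (n + 1) ∪ Finset.Icc (n + 2) (2 * (n + 1)) := by
    ext x; simp only [Finset.mem_Icc, Finset.mem_union]; omega
  have hdisj : Disjoint (Finset.Icc 1 (n + 1)) (Finset.Icc (n + 2) (2 * (n + 1))) := by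
    rw [Finset.disjoint_left]
    intro x hx1 hx2
    rw [Finset.mem_Icc] at hx1 hx2
    omega
  have h4 : ((Finset.Icc 1 (2 * (n + 1))).filter (Record m n π)).card
      = ((Finset.Icc 1 (n + 1)).filter (Record m n π)).card
        + ((Finset.Icc (n + 2) (2 * (n + 1))).filter (Record m n π)).card := by
    rw [hsplit, Finset.filter_union]
    exact Finset.card_union_of_disjoint (Finset.disjoint_filter_filter hdisj)
  have c1 := card_record m n π (n + 1)
  have c2 := card_record m n π (2 * (n + 1))
  have c3 := Mn_shift m n π hmn
  have hm : (m : ℤ) ≤ n := by exact_mod_cast hmn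
  have hfinal : (((Finset.Icc (n + 2) (2 * (n + 1))).filter (Record m n π)).card : ℤ)
      = (n : ℤ) + 1 - m := by
    have h5 : (((Finset.Icc 1 (2 * (n + 1))).filter (Record m n π)).card : ℤ)
        = (((Finset.Icc 1 (n + 1)).filter (Record m n π)).card : ℤ)
          + (((Finset.Icc (n + 2) (2 * (n + 1))).filter (Record m n π)).card : ℤ) := by
      rw [h4]; push_cast; ring
    rw [c2, c3] at h5
    rw [c1] at h5
    linarith
  have : (((Finset.Icc (n + 2) (2 * (n + 1))).filter (Record m n π)).card : ℤ)
      = ((n - m + 1 : ℕ) : ℤ) := by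
    rw [hfinal]; push_cast; omega
  exact_mod_cast this

end PollakAux

theorem pollak_coset (m n : ℕ) (hmn : m ≤ n) (π : Fin m → Fin (n + 1)) :
    {k : Fin (n + 1) | IsPF m n (fun i => ((π i + k : Fin (n + 1)) : ℕ) + 1)}.ncard =
      n - m + 1 := PollakAux.main m n π hmn
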